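/- Let a countable group G act by measurable measure-preserving transformations, ergodically, on a standard Borel probability space (X, μ), and assume that comm_G(St_G(x)) = St_G(x) for μ-almost every x ∈ X. Then ξ is, up to scalar multiples, the unique vector in L²(X×X, ν) fixed by the diagonal part of ρ: every f ∈ L²(X×X, ν) satisfying ρ(g,g)f = f for all g ∈ G is a scalar multiple of ξ. -/

import Mathlib

set_option linter.unusedSectionVars false
set_option linter.unusedVariables false
set_option maxHeartbeats 1000000


open MeasureTheory
open scoped Pointwise ENNReal

/-- `ν` is the groupoid measure on `X × X` associated with the action of `G` on `(X, μ)`: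
`ν(A) = ∫ #{y ∈ G·x : (y, x) ∈ A} dμ(x)`. -/
def IsGroupoidMeasure (G : Type*) {X : Type*} [Group G] [MulAction G X] [MeasurableSpace X]
    (μ : Measure X) (ν : Measure (X × X)) : Prop :=
  ∀ A : Set (X × X), MeasurableSet A →
    ν A = ∫⁻ x, ({y : X | y ∈ MulAction.orbit G x ∧ (y, x) ∈ A}.encard : ℝ≥0∞) ∂μ

namespace UDIV
variable {G X : Type*} [Group G] [MulAction G X]

/-- `x ∈ Fresh e n` iff `e n • x` is not hit by an earlier index. -/
def Fresh (e : ℕ → G) (n : ℕ) : Set X := {x | ∀ m < n, e m • x ≠ e n • x}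

lemma exists_fresh (e : ℕ → G) (he : Function.Surjective e) (x : X) {y : X}
    (hy : y ∈ MulAction.orbit G x) : ∃ n, x ∈ Fresh e n ∧ e n • x = y := by
  obtain ⟨g, hg⟩ := MulAction.mem_orbit_iff.mp hy
  obtain ⟨n₀, hn₀⟩ := he g
  have hS : ∃ n, e n • x = y := ⟨n₀, by rw [hn₀, hg]⟩
  classical
  refine ⟨Nat.find hS, fun m hm hme => ?_, Nat.find_spec hS⟩
  exact Nat.find_min hS hm (hme.trans (Nat.find_spec hS))

lemma fresh_inj {e : ℕ → G} {x : X} {m n : ℕ} (hm : x ∈ Fresh e m) (hn : x ∈ Fresh e n)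
    (h : e m • x = e n • x) : m = n := by
  rcases lt_trichotomy m n with hlt | he | hlt
  · exact absurd h (hn m hlt)
  · exact he
  · exact absurd h.symm (hm n hlt)

lemma tsum_of_bij {t : Set X} {σ : ℕ → X} {P : ℕ → Prop}
    (hmem : ∀ n, P n → σ n ∈ t)
    (hinj : ∀ m n, P m → P n → σ m = σ n → m = n)
    (hsurj : ∀ y ∈ t, ∃ n, P n ∧ σ n = y) (w : X → ℝ≥0∞) :
    ∑' n, Set.indicator {n | P n} (fun n => w (σ n)) n = ∑' y : t, w y := by
  have : ∑' n, Set.indicator {n | P n} (fun n => w (σ n)) n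
      = ∑' n : {n | P n}, w (σ n) := (tsum_subtype _ _).symm
  rw [this]
  have hbij : Function.Bijective (fun n : {n | P n} => (⟨σ n, hmem n n.2⟩ : t)) := by
    constructor
    · intro a b hab
      exact Subtype.ext (hinj a b a.2 b.2 (congrArg Subtype.val hab))
    · rintro ⟨y, hy⟩
      obtain ⟨n, hPn, hn⟩ := hsurj y hy
      exact ⟨⟨n, hPn⟩, Subtype.ext hn⟩
  exact Equiv.tsum_eq (Equiv.ofBijective _ hbij) (fun y : t => w y)

lemma tsum_fresh (e : ℕ → G) (he : Function.Surjective e) (x : X) (w : X → ℝ≥0∞) :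
    ∑' n, Set.indicator {n | x ∈ Fresh e n} (fun n => w (e n • x)) n
      = ∑' y : (MulAction.orbit G x), w y := by
  refine tsum_of_bij (fun n hn => MulAction.mem_orbit x (e n)) ?_ ?_ w
  · exact fun m n hm hn h => fresh_inj hm hn h
  · exact fun y hy => exists_fresh e he x hy

lemma mem_orbit_symm {x y : X} (h : y ∈ MulAction.orbit G x) : x ∈ MulAction.orbit G y := by
  obtain ⟨g, hg⟩ := MulAction.mem_orbit_iff.mp h
  exact MulAction.mem_orbit_iff.mpr ⟨g⁻¹, by rw [← hg, inv_smul_smul]⟩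

lemma tsum_fresh' (e : ℕ → G) (he : Function.Surjective e) (x : X) (w : X → ℝ≥0∞) :
    ∑' n, Set.indicator {n | (e n)⁻¹ • x ∈ Fresh e n} (fun n => w ((e n)⁻¹ • x)) n
      = ∑' y : (MulAction.orbit G x), w y := by
  refine tsum_of_bij ?_ ?_ ?_ w
  · intro n _
    exact MulAction.mem_orbit_iff.mpr ⟨(e n)⁻¹, rfl⟩
  · intro m n hm hn h
    have hmx : e m • ((e m)⁻¹ • x) = x := smul_inv_smul _ _
    have hnx : e n • ((e n)⁻¹ • x) = x := smul_inv_smul _ _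
    refine fresh_inj (x := (e m)⁻¹ • x) hm (h ▸ hn) ?_
    rw [hmx, h, hnx]
  · intro y hy
    obtain ⟨n, hfr, hn⟩ := exists_fresh e he y (mem_orbit_symm hy)
    have : (e n)⁻¹ • x = y := by rw [← hn, inv_smul_smul]
    exact ⟨n, by rwa [this], this⟩

lemma encard_eq_tsum (e : ℕ → G) (he : Function.Surjective e) (A : Set (X × X)) (x : X) :
    ({y | y ∈ MulAction.orbit G x ∧ (y, x) ∈ A}.encard : ℝ≥0∞)
      = ∑' n, Set.indicator (Fresh e n ∩ {z | (e n • z, z) ∈ A}) (fun _ => (1 : ℝ≥0∞)) x := by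
  rw [← ENNReal.tsum_set_one]
  rw [← tsum_of_bij (t := {y | y ∈ MulAction.orbit G x ∧ (y, x) ∈ A})
      (σ := fun n => e n • x) (P := fun n => x ∈ Fresh e n ∧ (e n • x, x) ∈ A)
      (fun n hn => ⟨MulAction.mem_orbit x (e n), hn.2⟩)
      (fun m n hm hn h => fresh_inj hm.1 hn.1 h)
      (fun y hy => by
        obtain ⟨n, hfr, hn⟩ := exists_fresh e he x hy.1
        exact ⟨n, ⟨hfr, hn.symm ▸ hy.2⟩, hn⟩) (fun _ => (1 : ℝ≥0∞))]
  exact tsum_congr fun n => rfl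

lemma encard_eq_tsum' (e : ℕ → G) (he : Function.Surjective e) (A : Set (X × X)) (x : X) :
    ({y | y ∈ MulAction.orbit G x ∧ (x, y) ∈ A}.encard : ℝ≥0∞)
      = ∑' n, Set.indicator ({z | (e n)⁻¹ • z ∈ Fresh e n} ∩ {z | (z, (e n)⁻¹ • z) ∈ A})
          (fun _ => (1 : ℝ≥0∞)) x := by
  rw [← ENNReal.tsum_set_one]
  rw [← tsum_of_bij (t := {y | y ∈ MulAction.orbit G x ∧ (x, y) ∈ A})
      (σ := fun n => (e n)⁻¹ • x)
      (P := fun n => (e n)⁻¹ • x ∈ Fresh e n ∧ (x, (e n)⁻¹ • x) ∈ A)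
      (fun n hn => ⟨MulAction.mem_orbit_iff.mpr ⟨(e n)⁻¹, rfl⟩, hn.2⟩)
      (fun m n hm hn h => by
        have hmx : e m • ((e m)⁻¹ • x) = x := smul_inv_smul _ _
        have hnx : e n • ((e n)⁻¹ • x) = x := smul_inv_smul _ _
        have h' : (e m)⁻¹ • x = (e n)⁻¹ • x := h
        refine fresh_inj (x := (e m)⁻¹ • x) hm.1 (h' ▸ hn.1) ?_
        rw [hmx, h', hnx])
      (fun y hy => by
        obtain ⟨n, hfr, hn⟩ := exists_fresh e he y (mem_orbit_symm hy.1)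
        have hxy : (e n)⁻¹ • x = y := by rw [← hn, inv_smul_smul]
        exact ⟨n, ⟨hxy.symm ▸ hfr, hxy.symm ▸ hy.2⟩, hxy⟩) (fun _ => (1 : ℝ≥0∞))]
  exact tsum_congr fun n => rfl


lemma mem_orbit_symm' {x y : X} (h : y ∈ MulAction.orbit G x) : x ∈ MulAction.orbit G y := by
  obtain ⟨g, hg⟩ := MulAction.mem_orbit_iff.mp h
  exact MulAction.mem_orbit_iff.mpr ⟨g⁻¹, by rw [← hg, inv_smul_smul]⟩

lemma stabilizer_conj {x y : X} (g : G) (hg : g • x = y) :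
    ConjAct.toConjAct g • (MulAction.stabilizer G x) = MulAction.stabilizer G y := by
  ext h
  rw [Subgroup.mem_pointwise_smul_iff_inv_smul_mem]
  have : (ConjAct.toConjAct g)⁻¹ • h = g⁻¹ * h * g := by
    rw [← ConjAct.toConjAct_inv, ConjAct.toConjAct_smul]
    group
  rw [this, MulAction.mem_stabilizer_iff, MulAction.mem_stabilizer_iff, ← hg]
  constructor
  · intro hyp
    rw [mul_smul, mul_smul] at hyp
    calc h • g • x = g • g⁻¹ • h • g • x := (smul_inv_smul g _).symm
      _ = g • x := by rw [hyp]
  · intro hyp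
    rw [mul_smul, mul_smul, hyp, inv_smul_smul]

lemma mem_commensurator_of_relindex {x y : X} (g : G) (hg : g • x = y)
    (h1 : (MulAction.stabilizer G y).relIndex (MulAction.stabilizer G x) ≠ 0)
    (h2 : (MulAction.stabilizer G x).relIndex (MulAction.stabilizer G y) ≠ 0) :
    g ∈ Subgroup.Commensurable.commensurator (MulAction.stabilizer G x) := by
  rw [Subgroup.Commensurable.commensurator_mem_iff, stabilizer_conj g hg]
  exact ⟨h1, h2⟩

lemma relindex_ne_zero_of_finite_orbit {x y : X}
    (h : (MulAction.orbit (MulAction.stabilizer G x) y).Finite) :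
    (MulAction.stabilizer G y).relIndex (MulAction.stabilizer G x) ≠ 0 := by
  have hsub : (MulAction.stabilizer G y).subgroupOf (MulAction.stabilizer G x)
      = MulAction.stabilizer (MulAction.stabilizer G x) y := by
    ext h
    simp only [Subgroup.mem_subgroupOf, MulAction.mem_stabilizer_iff]
    rfl
  show ((MulAction.stabilizer G y).subgroupOf (MulAction.stabilizer G x)).index ≠ 0
  rw [hsub]
  haveI : Finite (MulAction.orbit (MulAction.stabilizer G x) y) := h.to_subtype
  haveI : Finite ((MulAction.stabilizer G x)
      ⧸ MulAction.stabilizer (MulAction.stabilizer G x) y) :=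
    Finite.of_equiv _ (MulAction.orbitEquivQuotientStabilizer _ y)
  exact Subgroup.index_ne_zero_of_finite

variable (G) in
/-- everything we need to know about `F` at a base point `z`. -/
def GoodAt (F : X × X → ℂ) (z : X) : Prop :=
  (∀ (g : G) (w : X), w ∈ MulAction.orbit G z →
      F (g • w, g • z) = F (w, z) ∧ F (g • z, g • w) = F (z, w)) ∧
  (∑' w : MulAction.orbit G z, (‖F ((w : X), z)‖₊ : ℝ≥0∞) ^ 2 ≠ ⊤) ∧
  (∑' w : MulAction.orbit G z, (‖F (z, (w : X))‖₊ : ℝ≥0∞) ^ 2 ≠ ⊤) ∧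
  Subgroup.Commensurable.commensurator (MulAction.stabilizer G z) = MulAction.stabilizer G z

lemma core (F : X × X → ℂ) (x : X) (hgood : ∀ z ∈ MulAction.orbit G x, GoodAt G F z)
    {y : X} (hy : y ∈ MulAction.orbit G x) (hne : y ≠ x) : F (y, x) = 0 ∧ F (x, y) = 0 := by
  by_contra hcon
  set ε : ℝ := max ‖F (y, x)‖ ‖F (x, y)‖ with hε
  have hεpos : 0 < ε := by
    rcases eq_or_lt_of_le (le_max_left ‖F (y, x)‖ ‖F (x, y)‖) with h | h
    · by_contra hle
      push_neg at hle
      have h1 : ‖F (y, x)‖ = 0 := le_antisymm (le_trans (le_max_left _ _) hle) (norm_nonneg _)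
      have h2 : ‖F (x, y)‖ = 0 := le_antisymm (le_trans (le_max_right _ _) hle) (norm_nonneg _)
      exact hcon ⟨norm_eq_zero.mp h1, norm_eq_zero.mp h2⟩
    · exact lt_of_le_of_lt (norm_nonneg _) h
  set Φ : X → Set X := fun z => {w | w ∈ MulAction.orbit G z ∧ w ≠ z ∧
      (ε ≤ ‖F (w, z)‖ ∨ ε ≤ ‖F (z, w)‖)} with hΦ
  -- finiteness of Φ z for z in the orbit
  have hΦfin : ∀ z ∈ MulAction.orbit G x, (Φ z).Finite := by
    intro z hz
    obtain ⟨-, hfin1, hfin2, -⟩ := hgood z hz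
    have hεnn : ((ε.toNNReal : ℝ≥0∞) ^ 2) ≠ 0 := by
      apply pow_ne_zero
      simp only [ne_eq, ENNReal.coe_eq_zero]
      exact ne_of_gt (Real.toNNReal_pos.mpr hεpos)
    have h1 := ENNReal.finite_const_le_of_tsum_ne_top hfin1 hεnn
    have h2 := ENNReal.finite_const_le_of_tsum_ne_top hfin2 hεnn
    refine Set.Finite.subset ((h1.image Subtype.val).union (h2.image Subtype.val)) ?_
    rintro w ⟨hw, -, hbig⟩
    have coe2 : ∀ a : ℂ, ε ≤ ‖a‖ → ((ε.toNNReal : ℝ≥0∞) ^ 2) ≤ ((‖a‖₊ : ℝ≥0∞) ^ 2) := by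
      intro a ha
      have : (ε.toNNReal : ℝ≥0∞) ≤ (‖a‖₊ : ℝ≥0∞) := by
        rw [ENNReal.coe_le_coe]
        exact Real.toNNReal_le_iff_le_coe.mpr (ha.trans_eq (coe_nnnorm a).symm)
      exact pow_le_pow_left₀ zero_le this 2
    rcases hbig with hb | hb
    · exact Or.inl ⟨⟨w, hw⟩, coe2 _ hb, rfl⟩
    · exact Or.inr ⟨⟨w, hw⟩, coe2 _ hb, rfl⟩
  -- stabilizer equivariance of Φ
  have hΦequiv : ∀ z ∈ MulAction.orbit G x, ∀ h : G, h • z = z → ∀ w ∈ Φ z, h • w ∈ Φ z := by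
    intro z hz h hhz w hw
    obtain ⟨hinv, -, -, -⟩ := hgood z hz
    obtain ⟨hworb, hwne, hwbig⟩ := hw
    refine ⟨?_, ?_, ?_⟩
    · obtain ⟨g, hg⟩ := MulAction.mem_orbit_iff.mp hworb
      exact MulAction.mem_orbit_iff.mpr ⟨h * g, by rw [mul_smul, hg]⟩
    · intro hcontra
      apply hwne
      have : h • w = h • z := by rw [hcontra, hhz]
      exact smul_left_cancel h this
    · obtain ⟨e1, e2⟩ := hinv h w hworb
      rw [hhz] at e1 e2
      rcases hwbig with hb | hb
      · exact Or.inl (by rw [e1]; exact hb)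
      · exact Or.inr (by rw [e2]; exact hb)
  -- `y ∈ Φ x` and `x ∈ Φ y`
  have hyΦ : y ∈ Φ x := by
    refine ⟨hy, hne, ?_⟩
    rcases max_choice ‖F (y, x)‖ ‖F (x, y)‖ with h | h
    · exact Or.inl (le_of_eq h)
    · exact Or.inr (le_of_eq h)
  have hxΦ : x ∈ Φ y := by
    refine ⟨mem_orbit_symm' hy, hne.symm, ?_⟩
    rcases max_choice ‖F (y, x)‖ ‖F (x, y)‖ with h | h
    · exact Or.inr (le_of_eq h)
    · exact Or.inl (le_of_eq h)
  -- finite index both ways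
  have horb1 : (MulAction.orbit (MulAction.stabilizer G x) y).Finite := by
    refine Set.Finite.subset (hΦfin x (MulAction.mem_orbit_self x)) ?_
    rintro w ⟨⟨h, hh⟩, rfl⟩
    exact hΦequiv x (MulAction.mem_orbit_self x) h hh y hyΦ
  have horb2 : (MulAction.orbit (MulAction.stabilizer G y) x).Finite := by
    refine Set.Finite.subset (hΦfin y hy) ?_
    rintro w ⟨⟨h, hh⟩, rfl⟩
    exact hΦequiv y hy h hh x hxΦ
  obtain ⟨g, hg⟩ := MulAction.mem_orbit_iff.mp hy
  have hmem := mem_commensurator_of_relindex g hg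
    (relindex_ne_zero_of_finite_orbit horb1) (relindex_ne_zero_of_finite_orbit horb2)
  obtain ⟨-, -, -, hcommx⟩ := hgood x (MulAction.mem_orbit_self x)
  rw [hcommx] at hmem
  exact hne (by rw [← hg, hmem])


section Meas
variable [MeasurableSpace X] {e : ℕ → G} {μ : Measure X} {ν : Measure (X × X)}

lemma measurableSet_fresh (hD : MeasurableSet (Set.diagonal X))
    (hmeas : ∀ g : G, Measurable fun x : X => g • x) (e : ℕ → G) (n : ℕ) :
    MeasurableSet (Fresh e n : Set X) := by
  have : (Fresh e n : Set X) = ⋂ m ∈ Finset.range n,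
      ((fun x => (e m • x, e n • x)) ⁻¹' (Set.diagonal X))ᶜ := by
    ext x
    simp [Fresh, Set.mem_diagonal_iff]
  rw [this]
  exact MeasurableSet.biInter (Finset.range n).countable_toSet fun m _ =>
    (((hmeas (e m)).prodMk (hmeas (e n))) hD).compl

lemma measurable_pair (hmeas : ∀ g : G, Measurable fun x : X => g • x) (g : G) :
    Measurable fun x : X => (g • x, x) := (hmeas g).prodMk measurable_id

lemma ae_const_of_invariant {μ : Measure X} [IsProbabilityMeasure μ]
    (herg : ∀ E : Set X, MeasurableSet E → (∀ g : G, g • E = E) → μ E = 0 ∨ μ E = 1)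
    {ψ : X → ℝ} (hψ : Measurable ψ) (hinv : ∀ (g : G) (x : X), ψ (g • x) = ψ x) :
    ∃ c : ℝ, ∀ᵐ x ∂μ, ψ x = c := by
  set E : ℝ → Set X := fun t => {x | ψ x ≤ t} with hE
  have hEmeas : ∀ t, MeasurableSet (E t) := fun t => hψ measurableSet_Iic
  have hψinv : ∀ (g : G) (x : X), ψ (g⁻¹ • x) = ψ x := by
    intro g x
    have h := hinv g (g⁻¹ • x)
    rw [smul_inv_smul] at h
    exact h.symm
  have hEinv : ∀ t, ∀ g : G, g • E t = E t := by
    intro t g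
    ext y
    rw [Set.mem_smul_set_iff_inv_smul_mem]
    simp only [hE, Set.mem_setOf_eq, hψinv g y]
  have hm : ∀ t, μ (E t) = 0 ∨ μ (E t) = 1 := fun t => herg (E t) (hEmeas t) (hEinv t)
  have hmono : ∀ {s t : ℝ}, s ≤ t → E s ⊆ E t := fun hst x hx => le_trans hx hst
  set A : Set ℝ := {t | μ (E t) = 1} with hA
  -- A is nonempty
  have hne : A.Nonempty := by
    by_contra hcon
    have h0 : ∀ n : ℕ, μ (E n) = 0 := by
      intro n
      rcases hm n with h | h
      · exact h
      · exact absurd (⟨(n : ℝ), h⟩ : A.Nonempty) hcon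
    have huniv : (Set.univ : Set X) = ⋃ n : ℕ, E n := by
      ext x
      simp only [Set.mem_univ, true_iff, Set.mem_iUnion]
      obtain ⟨n, hn⟩ := exists_nat_ge (ψ x)
      exact ⟨n, hn⟩
    have : μ (Set.univ : Set X) = 0 := by
      rw [huniv]; exact measure_iUnion_null h0
    simp [measure_univ] at this
  -- A is bounded below
  have hbdd : BddBelow A := by
    have : ∃ n : ℕ, μ (E (-(n : ℝ))) = 0 := by
      by_contra hcon
      push_neg at hcon
      have h1 : ∀ n : ℕ, μ (E (-(n : ℝ))) = 1 := fun n => (hm _).resolve_left (hcon n)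
      have hanti : Antitone fun n : ℕ => E (-(n : ℝ)) := fun m n hmn =>
        hmono (by exact_mod_cast neg_le_neg (Nat.cast_le.mpr hmn))
      have hempty : ⋂ n : ℕ, E (-(n : ℝ)) = ∅ := by
        ext x
        simp only [Set.mem_iInter, Set.mem_empty_iff_false, iff_false, not_forall]
        obtain ⟨n, hn⟩ := exists_nat_gt (-ψ x)
        exact ⟨n, by simp only [hE, Set.mem_setOf_eq, not_le]; linarith⟩
      have := hanti.measure_iInter (fun n => (hEmeas _).nullMeasurableSet)
        ⟨0, measure_ne_top μ _⟩
      rw [hempty] at this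
      simp only [measure_empty] at this
      have : (0 : ℝ≥0∞) = 1 := by
        rw [this]
        simp [h1]
      exact zero_ne_one this
    obtain ⟨n, hn⟩ := this
    refine ⟨-(n : ℝ), fun t ht => ?_⟩
    by_contra hlt
    push_neg at hlt
    have : μ (E t) ≤ μ (E (-(n : ℝ))) := measure_mono (hmono hlt.le)
    rw [ht, hn] at this
    exact (not_le.mpr zero_lt_one) (by exact_mod_cast this)
  set c := sInf A with hc
  have hmem_one : ∀ t, c < t → μ (E t) = 1 := by
    intro t ht
    obtain ⟨a, haA, hat⟩ := exists_lt_of_csInf_lt hne ht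
    have h2 : μ (E a) ≤ μ (E t) := measure_mono (hmono hat.le)
    rw [haA] at h2
    exact le_antisymm prob_le_one h2
  have hc1 : μ (E c) = 1 := by
    have hEc : E c = ⋂ n : ℕ, E (c + 1 / (n + 1)) := by
      ext x
      simp only [hE, Set.mem_setOf_eq, Set.mem_iInter]
      constructor
      · intro hx n
        have : (0 : ℝ) < 1 / (n + 1) := by positivity
        linarith
      · intro hx
        by_contra hlt
        push_neg at hlt
        obtain ⟨n, hn⟩ := exists_nat_one_div_lt (sub_pos.mpr hlt)
        have := hx n
        linarith [hn]
    rw [hEc]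
    have hanti : Antitone fun n : ℕ => E (c + 1 / ((n : ℝ) + 1)) := by
      intro m n hmn
      refine hmono (add_le_add_right ?_ c)
      apply one_div_le_one_div_of_le
      · positivity
      · exact_mod_cast add_le_add_left (Nat.cast_le.mpr hmn) 1
    rw [hanti.measure_iInter (fun n => (hEmeas _).nullMeasurableSet) ⟨0, measure_ne_top μ _⟩]
    have h1 : ∀ n : ℕ, μ (E (c + 1 / ((n : ℝ) + 1))) = 1 := by
      intro n
      refine hmem_one _ ?_
      have : (0 : ℝ) < 1 / ((n : ℝ) + 1) := by positivity
      linarith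
    simp only [one_div] at h1 ⊢
    simp [h1]
  have hc0 : μ {x | ψ x < c} = 0 := by
    have : {x | ψ x < c} = ⋃ n : ℕ, E (c - 1 / (n + 1)) := by
      ext x
      simp only [Set.mem_setOf_eq, Set.mem_iUnion, hE]
      constructor
      · intro hx
        obtain ⟨n, hn⟩ := exists_nat_one_div_lt (sub_pos.mpr hx)
        exact ⟨n, by linarith⟩
      · rintro ⟨n, hn⟩
        have : (0 : ℝ) < 1 / ((n : ℝ) + 1) := by positivity
        linarith
    rw [this]
    refine measure_iUnion_null fun n => ?_
    rcases hm (c - 1 / ((n : ℝ) + 1)) with h | h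
    · exact h
    · exfalso
      have hcle : c ≤ c - 1 / ((n : ℝ) + 1) := csInf_le hbdd h
      have : (0 : ℝ) < 1 / ((n : ℝ) + 1) := by positivity
      linarith
  refine ⟨c, ?_⟩
  have hsub : {x | ¬ ψ x = c} ⊆ {x | ψ x < c} ∪ (E c)ᶜ := by
    intro x hx
    rcases lt_trichotomy (ψ x) c with h | h | h
    · exact Or.inl h
    · exact absurd h hx
    · exact Or.inr (by simp only [hE, Set.mem_compl_iff, Set.mem_setOf_eq, not_le]; exact h)
  have hcompl : μ ((E c)ᶜ) = 0 := by
    rw [measure_compl (hEmeas c) (measure_ne_top μ _), measure_univ, hc1, tsub_self]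
  rw [ae_iff]
  refine measure_mono_null hsub ?_
  refine le_antisymm (le_trans (measure_union_le _ _) ?_) zero_le
  rw [hc0, hcompl, add_zero]


variable (hD : MeasurableSet (Set.diagonal X))
  (hmeas : ∀ g : G, Measurable fun x : X => g • x)
  (he : Function.Surjective e)
  (hν : IsGroupoidMeasure G μ ν)

include hD hmeas he hν

lemma nu_apply {A : Set (X × X)} (hA : MeasurableSet A) :
    ν A = ∑' n, μ (Fresh e n ∩ {z | (e n • z, z) ∈ A}) := by
  rw [hν A hA]
  have hmeasS : ∀ n : ℕ, MeasurableSet (Fresh e n ∩ {z | (e n • z, z) ∈ A}) := fun n =>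
    (measurableSet_fresh hD hmeas e n).inter ((measurable_pair hmeas (e n)) hA)
  calc ∫⁻ x, ({y : X | y ∈ MulAction.orbit G x ∧ (y, x) ∈ A}.encard : ℝ≥0∞) ∂μ
      = ∫⁻ x, ∑' n, Set.indicator (Fresh e n ∩ {z | (e n • z, z) ∈ A})
          (fun _ => (1 : ℝ≥0∞)) x ∂μ := by
        exact lintegral_congr fun x => encard_eq_tsum e he A x
    _ = ∑' n, ∫⁻ x, Set.indicator (Fresh e n ∩ {z | (e n • z, z) ∈ A})
          (fun _ => (1 : ℝ≥0∞)) x ∂μ :=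
        lintegral_tsum fun n => ((measurable_const.indicator (hmeasS n)).aemeasurable)
    _ = ∑' n, μ (Fresh e n ∩ {z | (e n • z, z) ∈ A}) := by
        refine tsum_congr fun n => ?_
        rw [lintegral_indicator (hmeasS n), setLIntegral_one]

lemma nu_eq_sum :
    ν = Measure.sum (fun n => Measure.map (fun x => (e n • x, x)) (μ.restrict (Fresh e n))) := by
  refine Measure.ext fun A hA => ?_
  rw [Measure.sum_apply _ hA, nu_apply hD hmeas he hν hA]
  refine tsum_congr fun n => ?_
  rw [Measure.map_apply (measurable_pair hmeas (e n)) hA,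
      Measure.restrict_apply ((measurable_pair hmeas (e n)) hA), Set.inter_comm]
  rfl

lemma lintegral_nu {h : X × X → ℝ≥0∞} (hh : Measurable h) :
    ∫⁻ p, h p ∂ν = ∫⁻ x, ∑' n, Set.indicator (Fresh e n) (fun z => h (e n • z, z)) x ∂μ := by
  rw [nu_eq_sum hD hmeas he hν, lintegral_sum_measure]
  calc ∑' n, ∫⁻ p, h p ∂(Measure.map (fun x => (e n • x, x)) (μ.restrict (Fresh e n)))
      = ∑' n, ∫⁻ x, Set.indicator (Fresh e n) (fun z => h (e n • z, z)) x ∂μ := by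
        refine tsum_congr fun n => ?_
        rw [lintegral_map hh (measurable_pair hmeas (e n)),
          lintegral_indicator (measurableSet_fresh hD hmeas e n)]
    _ = ∫⁻ x, ∑' n, Set.indicator (Fresh e n) (fun z => h (e n • z, z)) x ∂μ :=
        (lintegral_tsum fun n => ((hh.comp (measurable_pair hmeas (e n))).indicator
          (measurableSet_fresh hD hmeas e n)).aemeasurable).symm

lemma nu_swap (hmp : ∀ g : G, MeasurePreserving (fun x : X => g • x) μ μ) :
    Measure.map Prod.swap ν = ν := by
  refine Measure.ext fun A hA => ?_
  have hswapA : MeasurableSet (Prod.swap ⁻¹' A) := measurable_swap hA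
  rw [Measure.map_apply measurable_swap hA, hν _ hswapA]
  have hmeasB : ∀ n : ℕ,
      MeasurableSet ({z : X | (e n)⁻¹ • z ∈ Fresh e n} ∩ {z | (z, (e n)⁻¹ • z) ∈ A}) := fun n =>
    ((hmeas (e n)⁻¹) (measurableSet_fresh hD hmeas e n)).inter
      ((measurable_id.prodMk (hmeas (e n)⁻¹)) hA)
  show ∫⁻ x, ({y | y ∈ MulAction.orbit G x ∧ (x, y) ∈ A}.encard : ℝ≥0∞) ∂μ = ν A
  calc ∫⁻ x, ({y | y ∈ MulAction.orbit G x ∧ (x, y) ∈ A}.encard : ℝ≥0∞) ∂μ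
      = ∫⁻ x, ∑' n, Set.indicator ({z : X | (e n)⁻¹ • z ∈ Fresh e n}
          ∩ {z | (z, (e n)⁻¹ • z) ∈ A}) (fun _ => (1 : ℝ≥0∞)) x ∂μ :=
        lintegral_congr fun x => encard_eq_tsum' e he A x
    _ = ∑' n, ∫⁻ x, Set.indicator ({z : X | (e n)⁻¹ • z ∈ Fresh e n}
          ∩ {z | (z, (e n)⁻¹ • z) ∈ A}) (fun _ => (1 : ℝ≥0∞)) x ∂μ :=
        lintegral_tsum fun n => (measurable_const.indicator (hmeasB n)).aemeasurable
    _ = ∑' n, μ ({z : X | (e n)⁻¹ • z ∈ Fresh e n} ∩ {z | (z, (e n)⁻¹ • z) ∈ A}) := by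
        refine tsum_congr fun n => ?_
        rw [lintegral_indicator (hmeasB n), setLIntegral_one]
    _ = ∑' n, μ (Fresh e n ∩ {z | (e n • z, z) ∈ A}) := by
        refine tsum_congr fun n => ?_
        have hpre := (hmp ((e n)⁻¹)).measure_preimage
          (((measurableSet_fresh hD hmeas e n).inter
            ((measurable_pair hmeas (e n)) hA)).nullMeasurableSet)
        refine Eq.trans ?_ (hpre.trans ?_)
        · congr 1
          ext z
          simp only [Set.mem_preimage, Set.mem_inter_iff, Set.mem_setOf_eq, smul_inv_smul]
        · rfl
    _ = ν A := (nu_apply hD hmeas he hν hA).symm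

lemma nu_null {A : Set (X × X)} (hA : MeasurableSet A) (h0 : ν A = 0) :
    ∀ᵐ x ∂μ, ∀ y ∈ MulAction.orbit G x, (y, x) ∉ A := by
  rw [nu_apply hD hmeas he hν hA] at h0
  have hnull : ∀ n : ℕ, μ (Fresh e n ∩ {z | (e n • z, z) ∈ A}) = 0 := by
    intro n
    exact le_antisymm (le_trans (ENNReal.le_tsum n) h0.le) zero_le
  have : μ (⋃ n, Fresh e n ∩ {z | (e n • z, z) ∈ A}) = 0 := measure_iUnion_null hnull
  filter_upwards [measure_eq_zero_iff_ae_notMem.mp this] with x hx y hy hyA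
  obtain ⟨n, hfr, hn⟩ := exists_fresh e he x hy
  exact hx (Set.mem_iUnion.mpr ⟨n, hfr, by rw [Set.mem_setOf_eq, hn]; exact hyA⟩)

end Meas
end UDIV

open UDIV

/-- For an ergodic measure-preserving action of a countable group `G` on a standard Borel
probability space such that almost every stabilizer is self-commensurating, the diagonal vector
`ξ ∈ L²(X×X, ν)` (the class of the indicator of the diagonal) is, up to scalar multiples, the
unique vector fixed by `ρ(g, g)` for all `g ∈ G`. -/
theorem unique_diagonal_invariant_vector
    {G X : Type*} [Group G] [Countable G] [MulAction G X]
    [MeasurableSpace X] [StandardBorelSpace X]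
    (μ : Measure X) [IsProbabilityMeasure μ]
    (hmeas : ∀ g : G, Measurable fun x : X => g • x)
    (hmp : ∀ g : G, MeasurePreserving (fun x : X => g • x) μ μ)
    (herg : ∀ E : Set X, MeasurableSet E → (∀ g : G, g • E = E) → μ E = 0 ∨ μ E = 1)
    (hcomm : ∀ᵐ x ∂μ,
      Subgroup.Commensurable.commensurator (MulAction.stabilizer G x) = MulAction.stabilizer G x)
    (ν : Measure (X × X)) (hν : IsGroupoidMeasure G μ ν)
    (hD : MeasurableSet (Set.diagonal X))
    (hDfin : ν (Set.diagonal X) ≠ ⊤) (hD1 : ν (Set.diagonal X) = 1) :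
    ∀ f : Lp ℂ 2 ν,
      (∀ g : G, (fun p : X × X => f (g⁻¹ • p.1, g⁻¹ • p.2)) =ᵐ[ν] ⇑f) →
      ∃ c : ℂ, f = c • (indicatorConstLp 2 hD hDfin (1 : ℂ)) := by
  intro f hf
  classical
  haveI : Nonempty G := ⟨1⟩
  obtain ⟨e, he⟩ := exists_surjective_nat G
  set F : X × X → ℂ := ⇑f with hF
  have hFsm : StronglyMeasurable F := Lp.stronglyMeasurable f
  have hFmeas : Measurable F := hFsm.measurable
  -- invariance difference sets
  set A : G → Set (X × X) := fun g => {p : X × X | F (g • p.1, g • p.2) ≠ F p} with hA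
  have hmg : ∀ g : G, Measurable fun p : X × X => (g • p.1, g • p.2) := fun g =>
    ((hmeas g).comp measurable_fst).prodMk ((hmeas g).comp measurable_snd)
  have hAmeas : ∀ g, MeasurableSet (A g) := fun g =>
    (measurableSet_eq_fun (hFmeas.comp (hmg g)) hFmeas).compl
  have hAnull : ∀ g, ν (A g) = 0 := by
    intro g
    have h := hf g⁻¹
    simp only [inv_inv] at h
    exact ae_iff.mp h
  have hswapnull : ∀ g, ν (Prod.swap ⁻¹' (A g)) = 0 := by
    intro g
    rw [← Measure.map_apply measurable_swap (hAmeas g), nu_swap hD hmeas he hν hmp]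
    exact hAnull g
  have hinv1 : ∀ᵐ x ∂μ, ∀ (g : G), ∀ y ∈ MulAction.orbit G x, F (g • y, g • x) = F (y, x) := by
    rw [ae_all_iff]
    intro g
    filter_upwards [nu_null hD hmeas he hν (hAmeas g) (hAnull g)] with x hx y hy
    have := hx y hy
    simpa [hA, not_not] using this
  have hinv2 : ∀ᵐ x ∂μ, ∀ (g : G), ∀ y ∈ MulAction.orbit G x, F (g • x, g • y) = F (x, y) := by
    rw [ae_all_iff]
    intro g
    filter_upwards [nu_null hD hmeas he hν (measurable_swap (hAmeas g)) (hswapnull g)]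
      with x hx y hy
    have := hx y hy
    simpa [hA, not_not] using this
  -- square integrability
  have hL2 : ∫⁻ p, (‖F p‖₊ : ℝ≥0∞) ^ 2 ∂ν < ⊤ := by
    have h1 := (Lp.memLp f).2
    rw [eLpNorm_lt_top_iff_lintegral_rpow_enorm_lt_top (by norm_num) (by norm_num)] at h1
    simp only [enorm_eq_nnnorm] at h1
    have : ∀ p : X × X, (‖F p‖₊ : ℝ≥0∞) ^ ((2 : ℝ≥0∞).toReal) = (‖F p‖₊ : ℝ≥0∞) ^ 2 := by
      intro p
      rw [ENNReal.toReal_ofNat, ← ENNReal.rpow_natCast]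
      norm_num
    rwa [lintegral_congr this] at h1
  -- a.e. summability in the first variable
  set q1 : X × X → ℝ≥0∞ := fun p => (‖F p‖₊ : ℝ≥0∞) ^ 2 with hq1
  have hq1meas : Measurable q1 := (hFmeas.nnnorm.coe_nnreal_ennreal).pow_const 2
  have hSum1meas : Measurable (fun x : X =>
      ∑' n, Set.indicator (Fresh e n) (fun z => q1 (e n • z, z)) x) :=
    Measurable.ennreal_tsum fun n =>
      (hq1meas.comp (measurable_pair hmeas (e n))).indicator (measurableSet_fresh hD hmeas e n)
  have hSum1int : ∫⁻ x, ∑' n, Set.indicator (Fresh e n) (fun z => q1 (e n • z, z)) x ∂μ < ⊤ := by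
    rw [← lintegral_nu hD hmeas he hν hq1meas]; exact hL2
  have hfin1 : ∀ᵐ x ∂μ, ∑' w : MulAction.orbit G x, (‖F ((w : X), x)‖₊ : ℝ≥0∞) ^ 2 ≠ ⊤ := by
    filter_upwards [ae_lt_top hSum1meas hSum1int.ne] with x hx
    rw [← tsum_fresh e he x (fun y => (‖F (y, x)‖₊ : ℝ≥0∞) ^ 2)]
    have heq : ∑' n, Set.indicator (Fresh e n) (fun z => q1 (e n • z, z)) x
        = ∑' n, Set.indicator {n | x ∈ Fresh e n}
            (fun n => (‖F (e n • x, x)‖₊ : ℝ≥0∞) ^ 2) n := tsum_congr fun n => rfl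
    rw [heq] at hx
    exact hx.ne
  -- a.e. summability in the second variable
  set q2 : X × X → ℝ≥0∞ := fun p => (‖F (p.2, p.1)‖₊ : ℝ≥0∞) ^ 2 with hq2
  have hq2meas : Measurable q2 :=
    ((hFmeas.comp measurable_swap).nnnorm.coe_nnreal_ennreal).pow_const 2
  have hSum2meas : Measurable (fun x : X =>
      ∑' n, Set.indicator (Fresh e n) (fun z => q2 (e n • z, z)) x) :=
    Measurable.ennreal_tsum fun n =>
      (hq2meas.comp (measurable_pair hmeas (e n))).indicator (measurableSet_fresh hD hmeas e n)
  have hSum2int : ∫⁻ x, ∑' n, Set.indicator (Fresh e n) (fun z => q2 (e n • z, z)) x ∂μ < ⊤ := by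
    rw [← lintegral_nu hD hmeas he hν hq2meas]
    have : ∫⁻ p, q2 p ∂ν = ∫⁻ p, q1 p ∂ν := by
      conv_rhs => rw [← nu_swap hD hmeas he hν hmp]
      rw [lintegral_map hq1meas measurable_swap]
      rfl
    rw [this]; exact hL2
  have hfin2 : ∀ᵐ x ∂μ, ∑' w : MulAction.orbit G x, (‖F (x, (w : X))‖₊ : ℝ≥0∞) ^ 2 ≠ ⊤ := by
    filter_upwards [ae_lt_top hSum2meas hSum2int.ne] with x hx
    rw [← tsum_fresh e he x (fun y => (‖F (x, y)‖₊ : ℝ≥0∞) ^ 2)]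
    have heq : ∑' n, Set.indicator (Fresh e n) (fun z => q2 (e n • z, z)) x
        = ∑' n, Set.indicator {n | x ∈ Fresh e n}
            (fun n => (‖F (x, e n • x)‖₊ : ℝ≥0∞) ^ 2) n := tsum_congr fun n => rfl
    rw [heq] at hx
    exact hx.ne
  -- the good set
  have hGood : ∀ᵐ x ∂μ, GoodAt G F x := by
    filter_upwards [hinv1, hinv2, hfin1, hfin2, hcomm] with x h1 h2 h3 h4 h5
    exact ⟨fun g w hw => ⟨h1 g w hw, h2 g w hw⟩, h3, h4, h5⟩
  set M : Set X := toMeasurable μ {x | ¬ GoodAt G F x} with hM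
  have hMmeas : MeasurableSet M := measurableSet_toMeasurable _ _
  have hMnull : μ M = 0 := by
    rw [hM, measure_toMeasurable]
    exact ae_iff.mp hGood
  set K : Set X := (⋃ g : G, (fun x => g • x) ⁻¹' M)ᶜ with hK
  have hKmeas : MeasurableSet K := (MeasurableSet.iUnion fun g => (hmeas g) hMmeas).compl
  have hKco : μ Kᶜ = 0 := by
    rw [hK, compl_compl]
    refine measure_iUnion_null fun g => ?_
    rw [(hmp g).measure_preimage hMmeas.nullMeasurableSet]
    exact hMnull
  have hKmem : ∀ x : X, x ∈ K ↔ ∀ g : G, g • x ∉ M := by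
    intro x
    simp [hK, Set.mem_iUnion]
  have hKinv : ∀ (g : G) (x : X), x ∈ K → g • x ∈ K := by
    intro g x hx
    rw [hKmem] at hx ⊢
    intro h
    rw [← mul_smul]
    exact hx (h * g)
  have hKGood : ∀ x ∈ K, GoodAt G F x := by
    intro x hx
    have := (hKmem x).mp hx 1
    rw [one_smul] at this
    by_contra hbad
    exact this (subset_toMeasurable μ _ hbad)
  have hKorbit : ∀ x ∈ K, ∀ z ∈ MulAction.orbit G x, GoodAt G F z := by
    intro x hx z hz
    obtain ⟨g, hg⟩ := MulAction.mem_orbit_iff.mp hz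
    exact hKGood z (hg ▸ hKinv g x hx)
  -- off-diagonal vanishing on K
  have hoff : ∀ x ∈ K, ∀ y ∈ MulAction.orbit G x, y ≠ x → F (y, x) = 0 := fun x hx y hy hne =>
    (core F x (hKorbit x hx) hy hne).1
  -- the diagonal function is invariant, hence a.e. constant
  set φ : X → ℂ := K.indicator (fun x => F (x, x)) with hφ
  have hφmeas : Measurable φ :=
    (hFmeas.comp (measurable_id.prodMk measurable_id)).indicator hKmeas
  have hφinv : ∀ (g : G) (x : X), φ (g • x) = φ x := by
    intro g x
    by_cases hx : x ∈ K
    · rw [hφ, Set.indicator_of_mem (hKinv g x hx), Set.indicator_of_mem hx]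
      exact ((hKGood x hx).1 g x (MulAction.mem_orbit_self x)).1
    · rw [hφ, Set.indicator_of_notMem, Set.indicator_of_notMem hx]
      intro hgx
      have := hKinv g⁻¹ _ hgx
      rw [inv_smul_smul] at this
      exact hx this
  obtain ⟨cr, hcr⟩ := ae_const_of_invariant herg (Complex.measurable_re.comp hφmeas)
    (fun g x => by simp only [Function.comp_apply, hφinv g x])
  obtain ⟨ci, hci⟩ := ae_const_of_invariant herg (Complex.measurable_im.comp hφmeas)
    (fun g x => by simp only [Function.comp_apply, hφinv g x])
  set c : ℂ := ⟨cr, ci⟩ with hc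
  have hKae : ∀ᵐ x ∂μ, x ∈ K := by
    rw [ae_iff]
    exact hKco
  have hdiag : ∀ᵐ x ∂μ, F (x, x) = c := by
    filter_upwards [hcr, hci, hKae] with x h1 h2 h3
    have : φ x = F (x, x) := Set.indicator_of_mem h3 _
    rw [← this]
    exact Complex.ext h1 h2
  -- conclusion
  set ind : X × X → ℂ := (Set.diagonal X).indicator (fun _ => c) with hind
  have hindmeas : Measurable ind := measurable_const.indicator hD
  set B : Set (X × X) := {p | F p ≠ ind p} with hB
  have hBmeas : MeasurableSet B := (measurableSet_eq_fun hFmeas hindmeas).compl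
  have hBnull : ν B = 0 := by
    rw [nu_apply hD hmeas he hν hBmeas]
    have hz : ∀ n : ℕ, μ (Fresh e n ∩ {z | (e n • z, z) ∈ B}) = 0 := by
      intro n
      refine measure_mono_null ?_ (measure_union_null hKco (ae_iff.mp hdiag))
      rintro x ⟨hfr, hxB⟩
      by_contra hnot
      simp only [Set.mem_union, Set.mem_compl_iff, Set.mem_setOf_eq, not_or, not_not] at hnot
      obtain ⟨hxK, hxc⟩ := hnot
      have hmemB : F (e n • x, x) ≠ ind (e n • x, x) := hxB
      by_cases hyx : e n • x = x
      · apply hmemB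
        rw [hyx, hxc, hind, Set.indicator_of_mem (show (x, x) ∈ Set.diagonal X from rfl)]
      · apply hmemB
        rw [hoff x hxK (e n • x) (MulAction.mem_orbit x (e n)) hyx, hind,
          Set.indicator_of_notMem]
        intro hmem
        exact hyx hmem
    simp [hz]
  refine ⟨c, Lp.ext (μ := ν) ?_⟩
  have h1 : ∀ᵐ p ∂ν, F p = ind p := by
    rw [ae_iff]
    exact hBnull
  have h2 := Lp.coeFn_smul c (indicatorConstLp 2 hD hDfin (1 : ℂ))
  have h3 := indicatorConstLp_coeFn (p := 2) (hs := hD) (hμs := hDfin) (c := (1 : ℂ)) (μ := ν)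
  filter_upwards [h1, h2, h3] with p hp1 hp2 hp3
  show F p = _
  rw [hp1, hp2, Pi.smul_apply, hp3]
  by_cases hp : p ∈ Set.diagonal X
  · rw [hind, Set.indicator_of_mem hp, Set.indicator_of_mem hp]
    simp
  · rw [hind, Set.indicator_of_notMem hp, Set.indicator_of_notMem hp]
    simp
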